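/- Two-point stationary states, coupled case, part (c): assume D^{(12)} ≠ 0. There exist a two-species distribution ρ and indices ι ≠ κ ∈ {1,2} such that ρ^{(1)}(x_ι) = ρ^{(2)}(x_ι) = 0 (so both species have full mass at x_κ) and v^{(1)}_{ικ} > 0, v^{(2)}_{ικ} > 0, if and only if D^{(11)} < −D^{(12)} and D^{(22)} < −D^{(12)}. In that case the distribution is ρ^{(1)}(x_κ) = ρ^{(2)}(x_κ) = 1, and both choices of the aggregation vertex x_κ yield such a distribution. -/

import Mathlib

open Finset

/-- The velocity `v^{(i)}_{ικ}` on the two-point space; `ρ k l` denotes the vertex *mass*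
`ρ^{(k)}(x_l)`, so that `∑_λ (ΔK) ρ^{(k)}_λ μ_λ = ∑_l (ΔK) ρ k l`. -/
noncomputable def vel2 {d : ℕ} (x : Fin 2 → EuclideanSpace ℝ (Fin d))
    (K : Fin 2 → Fin 2 → EuclideanSpace ℝ (Fin d) → EuclideanSpace ℝ (Fin d) → ℝ)
    (ρ : Fin 2 → Fin 2 → ℝ) (i ι κ : Fin 2) : ℝ :=
  ∑ k : Fin 2, ∑ l : Fin 2, (K i k (x ι) (x l) - K i k (x κ) (x l)) * ρ k l

/-- A two-species distribution on the two-point space, in terms of the vertex masses. -/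
def IsDist2 (ρ : Fin 2 → Fin 2 → ℝ) : Prop :=
  (∀ i ι, 0 ≤ ρ i ι) ∧ ∀ i, ρ i 0 + ρ i 1 = 1


lemma vel2_aggregated {d : ℕ} (x : Fin 2 → EuclideanSpace ℝ (Fin d))
    (K : Fin 2 → Fin 2 → EuclideanSpace ℝ (Fin d) → EuclideanSpace ℝ (Fin d) → ℝ)
    (hKsym : ∀ i k p q, K i k p q = K i k q p)
    (hKdiag : ∀ i k : Fin 2, ∀ p q : EuclideanSpace ℝ (Fin d), K i k p p = K i k q q)
    (D : Fin 2 → Fin 2 → ℝ)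
    (hD : ∀ i k, D i k = K i k (x 0) (x 0) - K i k (x 0) (x 1))
    (ρ : Fin 2 → Fin 2 → ℝ) (i ι κ : Fin 2) (hικ : ι ≠ κ)
    (h00 : ρ 0 ι = 0) (h01 : ρ 0 κ = 1) (h10 : ρ 1 ι = 0) (h11 : ρ 1 κ = 1) :
    vel2 x K ρ i ι κ = -(D i 0) - D i 1 := by
  fin_cases ι <;> fin_cases κ <;> simp_all <;>
    simp only [vel2, Fin.sum_univ_two, h00, h01, h10, h11, hD]
  · fin_cases i <;> simp only [Fin.zero_eta, Fin.mk_one]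
    · rw [hKdiag.1.1 (x 1) (x 0), hKdiag.1.2 (x 1) (x 0), hD.1.1, hD.1.2]; ring
    · rw [hKdiag.2.1 (x 1) (x 0), hKdiag.2.2 (x 1) (x 0), hD.2.1, hD.2.2]; ring
  · fin_cases i <;> simp only [Fin.zero_eta, Fin.mk_one]
    · rw [hKsym.1.1 (x 1) (x 0), hKsym.1.2 (x 1) (x 0),
        hKdiag.1.1 (x 1) (x 0), hKdiag.1.2 (x 1) (x 0), hD.1.1, hD.1.2]; ring
    · rw [hKsym.2.1 (x 1) (x 0), hKsym.2.2 (x 1) (x 0),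
        hKdiag.2.1 (x 1) (x 0), hKdiag.2.2 (x 1) (x 0), hD.2.1, hD.2.2]; ring

/-- Proposition 3.6 c) (coupled case): a stationary state with both species aggregated at
the same vertex `x_κ` (i.e. `ρ^{(1)}(x_ι) = ρ^{(2)}(x_ι) = 0` and `v^{(1)}_{ικ} > 0`,
`v^{(2)}_{ικ} > 0`) exists iff `D^{(11)} < −D^{(12)}` and `D^{(22)} < −D^{(12)}`; in that
case both species have full mass at `x_κ`, and both choices of the aggregation vertex
occur. -/
theorem two_point_stationary_coupled_c
    (d : ℕ) (x : Fin 2 → EuclideanSpace ℝ (Fin d)) (hx : x 0 ≠ x 1)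
    (μ : Fin 2 → ℝ) (hμ : ∀ ι, 0 < μ ι)
    (η12 : ℝ) (hη : 0 < η12)
    (K : Fin 2 → Fin 2 → EuclideanSpace ℝ (Fin d) → EuclideanSpace ℝ (Fin d) → ℝ)
    (hKsym : ∀ i k p q, K i k p q = K i k q p)
    (hK12 : ∀ p q, K 0 1 p q = K 1 0 p q)
    (hKdiag : ∀ i k : Fin 2, ∀ p q : EuclideanSpace ℝ (Fin d), K i k p p = K i k q q)
    (D : Fin 2 → Fin 2 → ℝ)
    (hD : ∀ i k, D i k = K i k (x 0) (x 0) - K i k (x 0) (x 1))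
    (hD12 : D 0 1 ≠ 0) :
    ((∃ ρ, IsDist2 ρ ∧ ∃ ι κ : Fin 2, ι ≠ κ ∧
        ρ 0 ι = 0 ∧ ρ 1 ι = 0 ∧ 0 < vel2 x K ρ 0 ι κ ∧ 0 < vel2 x K ρ 1 ι κ)
      ↔ (D 0 0 < -(D 0 1) ∧ D 1 1 < -(D 0 1))) ∧
    (∀ ρ, IsDist2 ρ → ∀ ι κ : Fin 2, ι ≠ κ →
      ρ 0 ι = 0 → ρ 1 ι = 0 → 0 < vel2 x K ρ 0 ι κ → 0 < vel2 x K ρ 1 ι κ →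
        ρ 0 κ = 1 ∧ ρ 1 κ = 1) ∧
    ((D 0 0 < -(D 0 1) ∧ D 1 1 < -(D 0 1)) →
      ∀ ι κ : Fin 2, ι ≠ κ →
        ∃ ρ, IsDist2 ρ ∧ ρ 0 ι = 0 ∧ ρ 1 ι = 0 ∧
          0 < vel2 x K ρ 0 ι κ ∧ 0 < vel2 x K ρ 1 ι κ) := by

  have hD10 : D 1 0 = D 0 1 := by rw [hD, hD, hK12, hK12]
  have key2 : ∀ ρ : Fin 2 → Fin 2 → ℝ, IsDist2 ρ → ∀ ι κ : Fin 2, ι ≠ κ →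
      ρ 0 ι = 0 → ρ 1 ι = 0 → ρ 0 κ = 1 ∧ ρ 1 κ = 1 := by
    intro ρ hρ ι κ hικ h0 h1
    have s0 := hρ.2 0
    have s1 := hρ.2 1
    fin_cases ι <;> fin_cases κ <;> simp_all <;> constructor <;> linarith
  refine ⟨⟨?_, ?_⟩, fun ρ hρ ι κ hικ h0 h1 _ _ => key2 ρ hρ ι κ hικ h0 h1, ?_⟩
  · rintro ⟨ρ, hρ, ι, κ, hικ, h0, h1, hv0, hv1⟩
    obtain ⟨h0', h1'⟩ := key2 ρ hρ ι κ hικ h0 h1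
    rw [vel2_aggregated x K hKsym hKdiag D hD ρ 0 ι κ hικ h0 h0' h1 h1'] at hv0
    rw [vel2_aggregated x K hKsym hKdiag D hD ρ 1 ι κ hικ h0 h0' h1 h1'] at hv1
    constructor <;> linarith
  · rintro ⟨hc0, hc1⟩
    refine ⟨fun _ l => if l = 1 then 1 else 0, ⟨fun i ι => by positivity, fun i => by norm_num⟩,
      0, 1, by decide, by norm_num, by norm_num, ?_, ?_⟩
    · rw [vel2_aggregated x K hKsym hKdiag D hD _ 0 0 1 (by decide) (by norm_num)
        (by norm_num) (by norm_num) (by norm_num)]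
      linarith
    · rw [vel2_aggregated x K hKsym hKdiag D hD _ 1 0 1 (by decide) (by norm_num)
        (by norm_num) (by norm_num) (by norm_num)]
      linarith
  · rintro ⟨hc0, hc1⟩ ι κ hικ
    refine ⟨fun _ l => if l = κ then 1 else 0, ⟨fun i ι => by positivity, fun i => ?_⟩,
      by simp [hικ], by simp [hικ], ?_, ?_⟩
    · fin_cases κ <;> norm_num
    · rw [vel2_aggregated x K hKsym hKdiag D hD _ 0 ι κ hικ (by simp [hικ])
        (by simp) (by simp [hικ]) (by simp)]
      linarith
    · rw [vel2_aggregated x K hKsym hKdiag D hD _ 1 ι κ hικ (by simp [hικ])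
        (by simp) (by simp [hικ]) (by simp)]
      linarith
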